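/- arXiv:1204.1674 — 4 statements merged into one kernel-verified Lean document; each statement's English description precedes it below -/
import Mathlib

section
/- Let μ ∈ ℝ and 0 < ρ < 1, set γ = √(1−ρ²), let ν(x) = e^{−x²/2}/√(2π), and let He_k denote the probabilists' Hermite polynomial, He_k(x) = (−1)^k e^{x²/2} (d/dx)^k e^{−x²/2}, with the convention He_{−1} := 0. Define the transfer operator G by G(h)(x) := (μ+x) ∫_ℝ h(ρx + γy) ν(y) dy. Then for every integer k ≥ 0 and every x ∈ ℝ, G(He_k)(x) = ρ^k · ( μ·He_k(x) + k·He_{k−1}(x) + He_{k+1}(x) ). Equivalently, in the orthonormal basis h_k := He_k/√(k!) of L²(ν), the operator G satisfies G(h_k) = ρ^k ( μ h_k + √k · h_{k−1} + √(k+1) · h_{k+1} ), i.e. G = (μI + A + A†)R, where R(h_k) = ρ^k h_k, A(h_k) = √k h_{k−1} and A†(h_k) = √(k+1) h_{k+1} are the ladder operators of the quantum harmonic oscillator. -/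
open MeasureTheory ProbabilityTheory
open scoped NNReal ENNReal

/-- The probabilists' Hermite polynomial `He_k`, evaluated at a real point. -/
noncomputable def hermiteR (k : ℕ) (x : ℝ) : ℝ :=
  Polynomial.aeval x (Polynomial.hermite k)

lemma derivative_hermite (n : ℕ) :
    Polynomial.derivative (Polynomial.hermite (n + 1))
      = Polynomial.C ((n : ℤ) + 1) * Polynomial.hermite n := by
  ext k
  rw [Polynomial.coeff_derivative, Polynomial.coeff_C_mul, Polynomial.coeff_hermite,
    Polynomial.coeff_hermite]
  have hpar : Even (n + 1 + (k + 1)) ↔ Even (n + k) := by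
    simp [Nat.even_iff]; omega
  by_cases h : Even (n + k)
  · rw [if_pos (hpar.mpr h), if_pos h]
    have h1 : n + 1 - (k + 1) = n - k := by omega
    rw [h1]
    have h2 : (n + 1).choose (k + 1) * (k + 1) = (n + 1) * n.choose k :=
      (Nat.add_one_mul_choose_eq n k).symm
    have h2' : ((n + 1).choose (k + 1) : ℤ) * ((k : ℤ) + 1) = ((n : ℤ) + 1) * n.choose k := by
      exact_mod_cast congrArg (Nat.cast : ℕ → ℤ) h2
    linear_combination ((-1 : ℤ) ^ ((n - k) / 2) * ((n - k - 1).doubleFactorial : ℤ)) * h2'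
  · rw [if_neg (fun hc => h (hpar.mp hc)), if_neg h, zero_mul, mul_zero]

lemma hermiteR_zero (x : ℝ) : hermiteR 0 x = 1 := by
  simp [hermiteR, Polynomial.hermite_zero]

lemma hermiteR_one (x : ℝ) : hermiteR 1 x = x := by
  simp [hermiteR, Polynomial.hermite_one]

lemma hermiteR_succ (n : ℕ) (x : ℝ) :
    hermiteR (n + 1) x = x * hermiteR n x - (n : ℝ) * hermiteR (n - 1) x := by
  cases n with
  | zero => simp [hermiteR_one, hermiteR_zero]
  | succ m =>
    unfold hermiteR
    rw [Polynomial.hermite_succ, derivative_hermite]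
    simp only [map_sub, map_mul, Polynomial.aeval_X, Polynomial.aeval_C]
    push_cast
    ring

/-- The polynomial `y ↦ He_k (a + b y)` over `ℝ`. -/
noncomputable def hermiteComp (k : ℕ) (a b : ℝ) : Polynomial ℝ :=
  ((Polynomial.hermite k).map (Int.castRingHom ℝ)).comp
    (Polynomial.C a + Polynomial.C b * Polynomial.X)

lemma eval_hermiteComp (k : ℕ) (a b y : ℝ) :
    (hermiteComp k a b).eval y = hermiteR k (a + b * y) := by
  rw [hermiteComp, Polynomial.eval_comp]
  simp only [Polynomial.eval_add, Polynomial.eval_mul, Polynomial.eval_C, Polynomial.eval_X]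
  rw [hermiteR, Polynomial.aeval_def, Polynomial.eval₂_eq_eval_map, algebraMap_int_eq]

lemma derivative_hermiteComp (k : ℕ) (a b : ℝ) :
    Polynomial.derivative (hermiteComp (k + 1) a b)
      = Polynomial.C (((k : ℝ) + 1) * b) * hermiteComp k a b := by
  unfold hermiteComp
  rw [Polynomial.derivative_comp, Polynomial.derivative_map, derivative_hermite]
  simp only [Polynomial.map_mul, Polynomial.map_C, Polynomial.mul_comp, Polynomial.C_comp,
    Polynomial.derivative_add, Polynomial.derivative_C, Polynomial.derivative_mul,
    Polynomial.derivative_X, mul_one, mul_zero, zero_add]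
  push_cast [map_add, map_one, map_natCast]
  rw [Polynomial.C_mul, Polynomial.C_add, Polynomial.C_1, Polynomial.C_eq_natCast]
  ring

lemma integrable_pow_gauss (n : ℕ) :
    Integrable (fun y : ℝ => y ^ n * Real.exp (-(y ^ 2 / 2))) := by
  have h := integrable_rpow_mul_exp_neg_mul_sq (by norm_num : (0 : ℝ) < 1 / 2)
    (s := (n : ℝ)) (lt_of_lt_of_le (by norm_num) (Nat.cast_nonneg n))
  rw [show (fun x : ℝ => x ^ (n : ℝ) * Real.exp (-(1 / 2) * x ^ 2))
      = fun y : ℝ => y ^ n * Real.exp (-(y ^ 2 / 2)) from funext fun y => by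
    rw [Real.rpow_natCast]; congr 1; ring] at h
  exact h

lemma integrable_poly_gauss (P : Polynomial ℝ) :
    Integrable (fun y : ℝ => P.eval y * Real.exp (-(y ^ 2 / 2))) := by
  induction P using Polynomial.induction_on' with
  | add p q hp hq =>
    simp only [Polynomial.eval_add, add_mul]
    exact hp.add hq
  | monomial n a =>
    simpa [Polynomial.eval_monomial, mul_assoc] using (integrable_pow_gauss n).const_mul a

lemma ibp_gauss (P : Polynomial ℝ) :
    ∫ y : ℝ, y * P.eval y * Real.exp (-(y ^ 2 / 2))
      = ∫ y : ℝ, (Polynomial.derivative P).eval y * Real.exp (-(y ^ 2 / 2)) := by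
  have hderiv : ∀ y : ℝ, HasDerivAt (fun y : ℝ => P.eval y * Real.exp (-(y ^ 2 / 2)))
      (((Polynomial.derivative P).eval y - y * P.eval y) * Real.exp (-(y ^ 2 / 2))) y := by
    intro y
    have h1 : HasDerivAt (fun y : ℝ => P.eval y) ((Polynomial.derivative P).eval y) y :=
      P.hasDerivAt y
    have h0 : HasDerivAt (fun y : ℝ => -(y ^ 2 / 2)) (-y) y := by
      exact (((hasDerivAt_pow 2 y).div_const 2).neg).congr_deriv (by norm_num)
    have h2 := h0.exp
    have := h1.mul h2
    exact this.congr_deriv (by ring)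
  have hint : Integrable (fun y : ℝ =>
      ((Polynomial.derivative P).eval y - y * P.eval y) * Real.exp (-(y ^ 2 / 2))) := by
    have := integrable_poly_gauss (Polynomial.derivative P - Polynomial.X * P)
    simpa using this
  have hf := integrable_poly_gauss P
  have h0 := integral_eq_zero_of_hasDerivAt_of_integrable hderiv hint hf
  have hXP : Integrable (fun y : ℝ => y * P.eval y * Real.exp (-(y ^ 2 / 2))) := by
    have := integrable_poly_gauss (Polynomial.X * P)
    simpa using this
  have hsub : ∫ y : ℝ, ((Polynomial.derivative P).eval y - y * P.eval y) * Real.exp (-(y ^ 2 / 2))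
      = (∫ y : ℝ, (Polynomial.derivative P).eval y * Real.exp (-(y ^ 2 / 2)))
        - ∫ y : ℝ, y * P.eval y * Real.exp (-(y ^ 2 / 2)) := by
    simp_rw [sub_mul]
    exact integral_sub (integrable_poly_gauss _) hXP
  rw [hsub] at h0
  linarith

lemma gauss_total : ∫ y : ℝ, Real.exp (-(y ^ 2 / 2)) = Real.sqrt (2 * Real.pi) := by
  have h := integral_gaussian (1 / 2 : ℝ)
  have he : ∀ y : ℝ, -(1 / 2 : ℝ) * y ^ 2 = -(y ^ 2 / 2) := fun y => by ring
  simp_rw [he] at h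
  rw [h, show Real.pi / (1 / 2) = 2 * Real.pi by ring]

lemma integral_gaussianReal_eq (g : ℝ → ℝ) :
    ∫ y, g y ∂(gaussianReal 0 1)
      = (Real.sqrt (2 * Real.pi))⁻¹ * ∫ y, g y * Real.exp (-(y ^ 2 / 2)) := by
  rw [gaussianReal_of_var_ne_zero 0 one_ne_zero]
  have hd : gaussianPDF 0 1 = fun y => ((Real.toNNReal (gaussianPDFReal 0 1 y) : ℝ≥0) : ℝ≥0∞) :=
    rfl
  rw [hd, integral_withDensity_eq_integral_smul
    ((measurable_gaussianPDFReal 0 1).real_toNNReal)]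
  have : ∀ y : ℝ, (Real.toNNReal (gaussianPDFReal 0 1 y) : ℝ≥0) • g y
      = (Real.sqrt (2 * Real.pi))⁻¹ * (g y * Real.exp (-(y ^ 2 / 2))) := by
    intro y
    rw [NNReal.smul_def, Real.coe_toNNReal _ (gaussianPDFReal_nonneg 0 1 y), smul_eq_mul]
    simp only [gaussianPDFReal, NNReal.coe_one]
    ring_nf
  simp_rw [this]
  exact integral_const_mul _ _

lemma key_integral (ρ γ : ℝ) (h : ρ ^ 2 + γ ^ 2 = 1) (k : ℕ) (x : ℝ) :
    ∫ y : ℝ, hermiteR k (ρ * x + γ * y) * Real.exp (-(y ^ 2 / 2))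
      = ρ ^ k * hermiteR k x * Real.sqrt (2 * Real.pi) := by
  induction k using Nat.twoStepInduction with
  | zero =>
    simp only [hermiteR_zero, one_mul, pow_zero]
    exact gauss_total
  | one =>
    have hzero : ∫ y : ℝ, y * Real.exp (-(y ^ 2 / 2)) = 0 := by
      have := ibp_gauss (Polynomial.C 1)
      simpa using this
    simp only [hermiteR_one, pow_one]
    have hsplit : ∀ y : ℝ, (ρ * x + γ * y) * Real.exp (-(y ^ 2 / 2))
        = (ρ * x) * Real.exp (-(y ^ 2 / 2)) + γ * (y * Real.exp (-(y ^ 2 / 2))) := by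
      intro y; ring
    simp_rw [hsplit]
    rw [integral_add (by simpa using (integrable_pow_gauss 0).const_mul (ρ * x))
      (by simpa [mul_assoc] using ((integrable_pow_gauss 1).const_mul γ)),
      integral_const_mul, integral_const_mul, hzero, gauss_total]
    ring
  | more n ih0 ih1 =>
    have e1 : ∀ y : ℝ, hermiteR (n + 2) (ρ * x + γ * y) * Real.exp (-(y ^ 2 / 2))
        = (ρ * x) * (hermiteR (n + 1) (ρ * x + γ * y) * Real.exp (-(y ^ 2 / 2)))
          + γ * (y * (hermiteComp (n + 1) (ρ * x) γ).eval y * Real.exp (-(y ^ 2 / 2)))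
          - ((n : ℝ) + 1) * (hermiteR n (ρ * x + γ * y) * Real.exp (-(y ^ 2 / 2))) := by
      intro y
      rw [eval_hermiteComp]
      have := hermiteR_succ (n + 1) (ρ * x + γ * y)
      simp only [Nat.add_sub_cancel] at this
      rw [this]
      push_cast
      ring
    have hA : Integrable (fun y : ℝ =>
        hermiteR (n + 1) (ρ * x + γ * y) * Real.exp (-(y ^ 2 / 2))) := by
      have := integrable_poly_gauss (hermiteComp (n + 1) (ρ * x) γ)
      simpa [eval_hermiteComp] using this
    have hB : Integrable (fun y : ℝ =>
        hermiteR n (ρ * x + γ * y) * Real.exp (-(y ^ 2 / 2))) := by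
      have := integrable_poly_gauss (hermiteComp n (ρ * x) γ)
      simpa [eval_hermiteComp] using this
    have hX : Integrable (fun y : ℝ =>
        y * (hermiteComp (n + 1) (ρ * x) γ).eval y * Real.exp (-(y ^ 2 / 2))) := by
      have := integrable_poly_gauss (Polynomial.X * hermiteComp (n + 1) (ρ * x) γ)
      simpa using this
    have hibp : ∫ y : ℝ, y * (hermiteComp (n + 1) (ρ * x) γ).eval y * Real.exp (-(y ^ 2 / 2))
        = ((n : ℝ) + 1) * γ * (ρ ^ n * hermiteR n x * Real.sqrt (2 * Real.pi)) := by
      rw [ibp_gauss, derivative_hermiteComp]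
      simp_rw [Polynomial.eval_mul, Polynomial.eval_C, eval_hermiteComp, mul_assoc]
      rw [integral_const_mul, integral_const_mul, ih0]
      ring
    calc ∫ y : ℝ, hermiteR (n + 2) (ρ * x + γ * y) * Real.exp (-(y ^ 2 / 2))
        = ∫ y : ℝ, ((ρ * x) * (hermiteR (n + 1) (ρ * x + γ * y) * Real.exp (-(y ^ 2 / 2)))
            + γ * (y * (hermiteComp (n + 1) (ρ * x) γ).eval y * Real.exp (-(y ^ 2 / 2)))
            - ((n : ℝ) + 1) * (hermiteR n (ρ * x + γ * y) * Real.exp (-(y ^ 2 / 2)))) := by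
          exact integral_congr_ae (Filter.Eventually.of_forall e1)
      _ = (ρ * x) * (∫ y : ℝ, hermiteR (n + 1) (ρ * x + γ * y) * Real.exp (-(y ^ 2 / 2)))
            + γ * (∫ y : ℝ, y * (hermiteComp (n + 1) (ρ * x) γ).eval y * Real.exp (-(y ^ 2 / 2)))
            - ((n : ℝ) + 1) * (∫ y : ℝ, hermiteR n (ρ * x + γ * y) * Real.exp (-(y ^ 2 / 2))) := by
          have hfg : Integrable (fun y : ℝ =>
              (ρ * x) * (hermiteR (n + 1) (ρ * x + γ * y) * Real.exp (-(y ^ 2 / 2)))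
                + γ * (y * (hermiteComp (n + 1) (ρ * x) γ).eval y * Real.exp (-(y ^ 2 / 2)))) :=
            (hA.const_mul _).add (hX.const_mul _)
          rw [integral_sub hfg (hB.const_mul _),
            integral_add (hA.const_mul _) (hX.const_mul _),
            integral_const_mul, integral_const_mul, integral_const_mul]
      _ = ρ ^ (n + 2) * hermiteR (n + 2) x * Real.sqrt (2 * Real.pi) := by
          rw [ih1, ih0, hibp]
          have hrec := hermiteR_succ (n + 1) x
          simp only [Nat.add_sub_cancel] at hrec
          have hγ2 : γ ^ 2 = 1 - ρ ^ 2 := by linarith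
          rw [hrec]
          push_cast
          linear_combination (Real.sqrt (2 * Real.pi) * ρ ^ n * ((n : ℝ) + 1)
            * hermiteR n x) * hγ2

/-- Action of the transfer operator
`G(h)(x) = (μ+x) ∫ h(ρx + γy) dN(0,1)(y)` on the Hermite polynomials:
`G(He_k) = ρ^k (μ He_k + k He_{k-1} + He_{k+1})` (with `He_{-1} := 0`; for `k = 0`
the middle term vanishes since its coefficient `k` is zero). -/
theorem transfer_operator_on_hermite
    (μ ρ : ℝ) (hρ0 : 0 < ρ) (hρ1 : ρ < 1)
    (γ : ℝ) (hγ : γ = Real.sqrt (1 - ρ ^ 2)) (k : ℕ) (x : ℝ) :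
    (μ + x) * ∫ y, hermiteR k (ρ * x + γ * y) ∂(gaussianReal 0 1)
      = ρ ^ k * (μ * hermiteR k x + (k : ℝ) * hermiteR (k - 1) x
          + hermiteR (k + 1) x) := by
  have hρ2 : ρ ^ 2 ≤ 1 := by nlinarith
  have hγ2 : γ ^ 2 = 1 - ρ ^ 2 := by
    rw [hγ, Real.sq_sqrt (by linarith)]
  have hsum : ρ ^ 2 + γ ^ 2 = 1 := by linarith
  rw [integral_gaussianReal_eq, key_integral ρ γ hsum k x]
  have hs : Real.sqrt (2 * Real.pi) ≠ 0 := by positivity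
  rw [show (Real.sqrt (2 * Real.pi))⁻¹ * (ρ ^ k * hermiteR k x * Real.sqrt (2 * Real.pi))
      = ρ ^ k * hermiteR k x from by
    rw [mul_comm (ρ ^ k * hermiteR k x), ← mul_assoc, inv_mul_cancel₀ hs, one_mul]]
  have hx : x * hermiteR k x = hermiteR (k + 1) x + (k : ℝ) * hermiteR (k - 1) x := by
    have := hermiteR_succ k x
    linarith
  linear_combination (ρ ^ k) * hx
end

section
/- Let μ ∈ ℝ and 0 < ρ < 1, set γ = √(1−ρ²), let ν(x) = e^{−x²/2}/√(2π), let He_k denote the probabilists' Hermite polynomial, and define Q_N : ℝ → ℝ recursively by Q_0 ≡ 1 and Q_{N+1}(x) = (μ+x) ∫_ℝ Q_N(ρx + γy) ν(y) dy. Define the Fourier coefficients q_{N,k} := (1/√(k!)) ∫_ℝ Q_N(x)·He_k(x) ν(x) dx for k ≥ 0, with the convention q_{N,−1} := 0. Then for all N ≥ 0 and all k ≥ 0, q_{N+1,k} = √k·ρ^{k−1}·q_{N,k−1} + μ·ρ^k·q_{N,k} + √(k+1)·ρ^{k+1}·q_{N,k+1}; moreover q_{0,0} = 1, q_{0,k}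 = 0 for k ≥ 1, and q_{N,k} = 0 for k > N. -/
open MeasureTheory ProbabilityTheory

open Polynomial Real

namespace HFC

noncomputable def w (x : ℝ) : ℝ := gaussianPDFReal 0 1 x

lemma w_def (x : ℝ) : w x = (Real.sqrt (2 * Real.pi))⁻¹ * Real.exp (-(x ^ 2) / 2) := by
  simp [w, gaussianPDFReal]

lemma w_nonneg (x : ℝ) : 0 ≤ w x := gaussianPDFReal_nonneg 0 1 x

lemma measurable_w : Measurable w := measurable_gaussianPDFReal 0 1

lemma hasDerivAt_w (x : ℝ) : HasDerivAt w (-x * w x) x := by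
  have h1 : HasDerivAt (fun x : ℝ => -(x ^ 2) / 2) (-x) x := by
    have := ((hasDerivAt_pow 2 x).neg).div_const 2
    refine this.congr_deriv (Eq.symm ?_)
    simp
    ring
  have h2 := (h1.exp).const_mul (Real.sqrt (2 * Real.pi))⁻¹
  have : w = fun x => (Real.sqrt (2 * Real.pi))⁻¹ * Real.exp (-(x ^ 2) / 2) :=
    funext w_def
  rw [this]
  refine h2.congr_deriv (Eq.symm ?_)
  change -x * ((Real.sqrt (2 * Real.pi))⁻¹ * Real.exp (-(x ^ 2) / 2)) = _
  ring

lemma gaussianReal_eq :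
    gaussianReal 0 1 = volume.withDensity (fun x => ((w x).toNNReal : ENNReal)) := by
  rw [gaussianReal_of_var_ne_zero _ one_ne_zero]
  rfl

lemma integral_gauss_eq (f : ℝ → ℝ) :
    ∫ x, f x ∂(gaussianReal 0 1) = ∫ x, f x * w x := by
  rw [gaussianReal_eq, integral_withDensity_eq_integral_smul measurable_w.real_toNNReal f]
  congr 1
  funext x
  rw [NNReal.smul_def, Real.coe_toNNReal _ (w_nonneg x), smul_eq_mul, mul_comm]

lemma abs_pow_le (n : ℕ) (x : ℝ) : |x| ^ n ≤ (n.factorial : ℝ) * Real.exp |x| := by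
  have h := Real.sum_le_exp_of_nonneg (abs_nonneg x) (n + 1)
  have h2 : |x| ^ n / (n.factorial : ℝ) ≤ Real.exp |x| := by
    refine le_trans ?_ h
    have : ∀ i ∈ Finset.range (n + 1), (0:ℝ) ≤ |x| ^ i / (i.factorial : ℝ) := by
      intro i _
      positivity
    simpa using Finset.single_le_sum this (Finset.self_mem_range_succ n)
  have hfac : (0:ℝ) < (n.factorial : ℝ) := by positivity
  rw [div_le_iff₀ hfac] at h2
  linarith [h2]

lemma pow_w_bound (n : ℕ) (x : ℝ) :
    ‖x ^ n * w x‖ ≤ (Real.sqrt (2 * Real.pi))⁻¹ * (n.factorial : ℝ) * Real.exp 1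
      * Real.exp (-(4:ℝ)⁻¹ * x ^ 2) := by
  have hw := w_nonneg x
  rw [Real.norm_eq_abs, abs_mul, abs_of_nonneg hw, abs_pow, w_def]
  have h1 : |x| ^ n ≤ (n.factorial : ℝ) * Real.exp |x| := abs_pow_le n x
  have h2 : Real.exp |x| * Real.exp (-(x ^ 2) / 2) ≤ Real.exp 1 * Real.exp (-(4:ℝ)⁻¹ * x ^ 2) := by
    rw [← Real.exp_add, ← Real.exp_add]
    apply Real.exp_le_exp.2
    have : |x| ≤ 1 + x ^ 2 / 4 := by
      nlinarith [sq_nonneg (|x| - 2), sq_abs x]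
    nlinarith [sq_abs x]
  calc |x| ^ n * ((Real.sqrt (2 * Real.pi))⁻¹ * Real.exp (-(x ^ 2) / 2))
      ≤ ((n.factorial : ℝ) * Real.exp |x|) * ((Real.sqrt (2 * Real.pi))⁻¹ * Real.exp (-(x ^ 2) / 2)) := by
        apply mul_le_mul_of_nonneg_right h1 (by positivity)
    _ = (Real.sqrt (2 * Real.pi))⁻¹ * (n.factorial : ℝ) * (Real.exp |x| * Real.exp (-(x ^ 2) / 2)) := by ring
    _ ≤ (Real.sqrt (2 * Real.pi))⁻¹ * (n.factorial : ℝ) * (Real.exp 1 * Real.exp (-(4:ℝ)⁻¹ * x ^ 2)) := by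
        apply mul_le_mul_of_nonneg_left h2 (by positivity)
    _ = _ := by ring

lemma integrable_pow_w (n : ℕ) : Integrable (fun x : ℝ => x ^ n * w x) := by
  have hg : Integrable (fun x : ℝ =>
      (Real.sqrt (2 * Real.pi))⁻¹ * (n.factorial : ℝ) * Real.exp 1
        * Real.exp (-(4:ℝ)⁻¹ * x ^ 2)) :=
    (integrable_exp_neg_mul_sq (by norm_num : (0:ℝ) < 4⁻¹)).const_mul _
  refine hg.mono' ?_ ?_
  · exact ((measurable_id.pow_const n).mul measurable_w).aestronglyMeasurable
  · exact Filter.Eventually.of_forall (pow_w_bound n)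

lemma integrable_poly_w (p : ℝ[X]) : Integrable (fun x : ℝ => p.eval x * w x) := by
  have : (fun x : ℝ => p.eval x * w x)
      = fun x => ∑ i ∈ Finset.range (p.natDegree + 1), p.coeff i * (x ^ i * w x) := by
    funext x
    rw [Polynomial.eval_eq_sum_range, Finset.sum_mul]
    simp [mul_assoc]
  rw [this]
  exact integrable_finset_sum _ (fun i _ => (integrable_pow_w i).const_mul _)

lemma integrable_poly_G (p : ℝ[X]) :
    Integrable (fun x : ℝ => p.eval x) (gaussianReal 0 1) := by
  rw [gaussianReal_eq]
  refine (integrable_withDensity_iff_integrable_smul (E := ℝ) (g := fun x => p.eval x)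
    measurable_w.real_toNNReal).2 ?_
  have : (fun x : ℝ => (w x).toNNReal • p.eval x) = fun x => p.eval x * w x := by
    funext x
    rw [NNReal.smul_def, Real.coe_toNNReal _ (w_nonneg x), smul_eq_mul, mul_comm]
  rw [this]
  exact integrable_poly_w p

noncomputable def J (p : ℝ[X]) : ℝ := ∫ x, p.eval x * w x

lemma intG (p : ℝ[X]) : ∫ x, p.eval x ∂(gaussianReal 0 1) = J p :=
  integral_gauss_eq (fun x => p.eval x)

lemma J_one : J 1 = 1 := by
  have := integral_gaussianPDFReal_eq_one 0 (one_ne_zero)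
  simpa [J, w] using this

lemma J_zero : J 0 = 0 := by simp [J]

lemma J_add (p q : ℝ[X]) : J (p + q) = J p + J q := by
  simp only [J, eval_add, add_mul]
  exact integral_add (integrable_poly_w p) (integrable_poly_w q)

lemma J_smul (c : ℝ) (p : ℝ[X]) : J (C c * p) = c * J p := by
  simp only [J, eval_mul, eval_C, mul_assoc]
  exact integral_const_mul c _

lemma J_sub (p q : ℝ[X]) : J (p - q) = J p - J q := by
  simp only [J, eval_sub, sub_mul]
  exact integral_sub (integrable_poly_w p) (integrable_poly_w q)

lemma J_sum {ι : Type*} (s : Finset ι) (f : ι → ℝ[X]) :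
    J (∑ i ∈ s, f i) = ∑ i ∈ s, J (f i) := by
  classical
  induction s using Finset.induction_on with
  | empty => simp [J]
  | insert _ _ h ih => rw [Finset.sum_insert h, J_add, ih, Finset.sum_insert h]

lemma J_stein (p : ℝ[X]) : J (X * p) = J (derivative p) := by
  have key : ∫ x : ℝ, (derivative p - X * p).eval x * w x = 0 := by
    apply integral_eq_zero_of_hasDerivAt_of_integrable
      (f := fun x => p.eval x * w x)
    · intro x
      have h := (p.hasDerivAt x).mul (hasDerivAt_w x)
      refine h.congr_deriv (Eq.symm ?_)
      simp only [eval_sub, eval_mul, eval_X]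
      ring
    · exact integrable_poly_w _
    · exact integrable_poly_w _
  have h2 : J (derivative p) - J (X * p) = 0 := by
    rw [← J_sub]; exact key
  linarith

lemma derivative_hermite_succ (k : ℕ) :
    derivative (hermite (k + 1)) = C ((k : ℤ) + 1) * hermite k := by
  induction k with
  | zero => simp [hermite_one, hermite_zero]
  | succ k ih =>
      rw [hermite_succ (k + 1), derivative_sub, derivative_mul, derivative_X, one_mul, ih,
        derivative_mul, derivative_C, zero_mul, zero_add, hermite_succ k]
      push_cast
      simp only [C_add, C_1, map_ofNat]
      ring

noncomputable def Hr (k : ℕ) : ℝ[X] := (hermite k).map (Int.castRingHom ℝ)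

lemma Hr_zero : Hr 0 = 1 := by simp [Hr, hermite_zero]

lemma Hr_succ (k : ℕ) : Hr (k + 1) = X * Hr k - derivative (Hr k) := by
  simp only [Hr, hermite_succ, Polynomial.map_sub, Polynomial.map_mul, map_X, derivative_map]

lemma derivative_Hr_succ (k : ℕ) : derivative (Hr (k + 1)) = C ((k : ℝ) + 1) * Hr k := by
  rw [Hr, derivative_map, derivative_hermite_succ, Polynomial.map_mul, map_C]
  simp [Hr]

lemma derivative_Hr (k : ℕ) : derivative (Hr k) = C (k : ℝ) * Hr (k - 1) := by
  cases k with
  | zero => simp [Hr_zero]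
  | succ k => rw [derivative_Hr_succ]; push_cast; simp

lemma X_mul_Hr (k : ℕ) : X * Hr k = Hr (k + 1) + C (k : ℝ) * Hr (k - 1) := by
  rw [Hr_succ, derivative_Hr]; ring

lemma aeval_eq_eval_Hr (x : ℝ) (k : ℕ) :
    (Polynomial.aeval x (hermite k) : ℝ) = (Hr k).eval x := by
  rw [Hr, aeval_def, eval_map]
  rfl

lemma J_Hr (k : ℕ) : J (Hr k) = if k = 0 then 1 else 0 := by
  cases k with
  | zero => simpa [Hr_zero] using J_one
  | succ k =>
      rw [Hr_succ, J_sub, J_stein]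
      simp

lemma J_Hr_mul_Hr (j k : ℕ) :
    J (Hr j * Hr k) = if j = k then (k.factorial : ℝ) else 0 := by
  induction j generalizing k with
  | zero =>
      rw [Hr_zero, one_mul, J_Hr]
      rcases Nat.eq_zero_or_pos k with hk | hk
      · subst hk; simp
      · rw [if_neg (Nat.pos_iff_ne_zero.1 hk), if_neg]
        omega
  | succ j ih =>
      have step : J (Hr (j + 1) * Hr k) = J (Hr j * derivative (Hr k)) := by
        have e1 : Hr (j + 1) * Hr k = X * (Hr j * Hr k) - derivative (Hr j) * Hr k := by
          rw [Hr_succ]; ring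
        rw [e1, J_sub, J_stein, derivative_mul, J_add]
        ring
      rw [step]
      cases k with
      | zero =>
          rw [Hr_zero, derivative_one, mul_zero, J_zero, if_neg (by omega)]
      | succ k =>
          rw [derivative_Hr_succ, mul_comm (Hr j), mul_assoc, J_smul, mul_comm (Hr k) (Hr j), ih k]
          rcases eq_or_ne j k with h | h
          · subst h
            rw [if_pos rfl, if_pos rfl, Nat.factorial_succ]
            push_cast
            ring
          · rw [if_neg h, if_neg (by omega), mul_zero]

lemma Hr_succ_succ (k : ℕ) :
    Hr (k + 2) = X * Hr (k + 1) - C ((k : ℝ) + 1) * Hr k := by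
  rw [Hr_succ (k + 1), derivative_Hr_succ]

lemma J_X : J X = 0 := by
  have := J_stein 1
  simpa [J_zero] using this

lemma Sm (ρ γ : ℝ) (hγ2 : γ ^ 2 = 1 - ρ ^ 2) (k : ℕ) (x : ℝ) :
    J ((Hr k).comp (C (ρ * x) + C γ * X)) = ρ ^ k * (Hr k).eval x := by
  suffices H : ∀ k : ℕ, (∀ y : ℝ, J ((Hr k).comp (C (ρ * y) + C γ * X)) = ρ ^ k * (Hr k).eval y)
      ∧ (∀ y : ℝ, J ((Hr (k+1)).comp (C (ρ * y) + C γ * X)) = ρ ^ (k+1) * (Hr (k+1)).eval y) by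
    exact (H k).1 x
  have hbase0 : ∀ y : ℝ, J ((Hr 0).comp (C (ρ * y) + C γ * X)) = ρ ^ 0 * (Hr 0).eval y := by
    intro y
    simp [Hr_zero, J_one]
  have hbase1 : ∀ y : ℝ, J ((Hr 1).comp (C (ρ * y) + C γ * X)) = ρ ^ 1 * (Hr 1).eval y := by
    intro y
    have h1 : Hr 1 = X := by
      rw [show (1:ℕ) = 0 + 1 from rfl, Hr_succ, Hr_zero]
      simp
    rw [h1, X_comp]
    have : J (C (ρ * y) + C γ * X) = ρ * y + γ * J X := by
      rw [J_add, ← mul_one (C (ρ * y)), J_smul, J_smul, J_one, mul_one]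
    rw [this, J_X]
    simp
  intro k
  induction k with
  | zero => exact ⟨hbase0, hbase1⟩
  | succ k ih =>
      refine ⟨ih.2, fun y => ?_⟩
      set M : ℝ[X] := C (ρ * y) + C γ * X with hM
      have hdM : derivative M = C γ := by simp [hM]
      have hXc : J (X * ((Hr (k+1)).comp M)) = γ * (((k:ℝ) + 1) * J ((Hr k).comp M)) := by
        rw [J_stein, derivative_comp, hdM, derivative_Hr_succ, mul_comp, C_comp, J_smul, J_smul]
      have expand : Hr (k + 1 + 1) = X * Hr (k + 1) - C ((k : ℝ) + 1) * Hr k := Hr_succ_succ k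
      rw [expand]
      simp only [sub_comp, mul_comp, X_comp, C_comp]
      rw [J_sub, J_smul]
      have hsplit : J (M * (Hr (k+1)).comp M)
          = ρ * y * J ((Hr (k+1)).comp M) + γ * J (X * ((Hr (k+1)).comp M)) := by
        rw [hM, add_mul, J_add, J_smul, mul_assoc (C γ) X _, J_smul]
      rw [hsplit, hXc, ih.2 y, ih.1 y]
      simp only [eval_sub, eval_mul, eval_X, eval_C]
      linear_combination ((k:ℝ)+1) * ρ ^ k * ((Hr k).eval y) * hγ2

noncomputable def a (μ ρ : ℝ) : ℕ → ℕ → ℝ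
  | 0, 0 => 1
  | 0, _ + 1 => 0
  | N + 1, 0 => μ * a μ ρ N 0 + ρ * a μ ρ N 1
  | N + 1, k + 1 => ρ ^ k * a μ ρ N k + μ * ρ ^ (k + 1) * a μ ρ N (k + 1)
      + ((k : ℝ) + 2) * ρ ^ (k + 2) * a μ ρ N (k + 2)

lemma a_zero_zero (μ ρ : ℝ) : a μ ρ 0 0 = 1 := by rw [a]

lemma a_zero_succ (μ ρ : ℝ) (k : ℕ) : a μ ρ 0 (k + 1) = 0 := by rw [a]

lemma a_succ_zero (μ ρ : ℝ) (N : ℕ) :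
    a μ ρ (N + 1) 0 = μ * a μ ρ N 0 + ρ * a μ ρ N 1 := by rw [a]

lemma a_succ_succ (μ ρ : ℝ) (N k : ℕ) :
    a μ ρ (N + 1) (k + 1) = ρ ^ k * a μ ρ N k + μ * ρ ^ (k + 1) * a μ ρ N (k + 1)
      + ((k : ℝ) + 2) * ρ ^ (k + 2) * a μ ρ N (k + 2) := by rw [a]

lemma a_eq_zero (μ ρ : ℝ) : ∀ N k, N < k → a μ ρ N k = 0 := by
  intro N
  induction N with
  | zero =>
      intro k hk
      match k, hk with
      | k + 1, _ => rfl
  | succ N ih =>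
      intro k hk
      match k, hk with
      | k + 1, hk =>
          have h1 : N < k := by omega
          rw [a, ih k h1, ih (k+1) (by omega), ih (k+2) (by omega)]
          ring

open Finset in
lemma key_sum (μ x : ℝ) (b c H : ℕ → ℝ) (N : ℕ)
    (hb1 : b (N + 1) = 0) (hb2 : b (N + 2) = 0)
    (hH : ∀ k : ℕ, x * H k = H (k + 1) + (k : ℝ) * H (k - 1))
    (hc0 : c 0 = μ * b 0 + b 1)
    (hcs : ∀ k : ℕ, c (k + 1) = b k + μ * b (k + 1) + ((k : ℝ) + 2) * b (k + 2)) :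
    (μ + x) * ∑ k ∈ range (N + 1), b k * H k = ∑ k ∈ range (N + 2), c k * H k := by
  have expand : ∀ k : ℕ, (μ + x) * (b k * H k)
      = μ * b k * H k + b k * H (k + 1) + (k : ℝ) * b k * H (k - 1) := by
    intro k
    have h := hH k
    calc (μ + x) * (b k * H k) = μ * b k * H k + b k * (x * H k) := by ring
      _ = _ := by rw [h]; ring
  rw [Finset.mul_sum, Finset.sum_congr rfl (fun k _ => expand k)]
  rw [Finset.sum_add_distrib, Finset.sum_add_distrib]
  have hS1 : ∑ k ∈ range (N + 1), μ * b k * H k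
      = μ * b 0 * H 0 + ∑ k ∈ range (N + 1), μ * b (k + 1) * H (k + 1) := by
    rw [Finset.sum_range_succ' (fun k => μ * b k * H k) N]
    rw [Finset.sum_range_succ (fun k => μ * b (k + 1) * H (k + 1)) N, hb1]
    ring
  have hS3 : ∑ k ∈ range (N + 1), (k : ℝ) * b k * H (k - 1)
      = b 1 * H 0 + ∑ k ∈ range (N + 1), ((k : ℝ) + 2) * b (k + 2) * H (k + 1) := by
    set g : ℕ → ℝ := fun k => ((k : ℝ) + 1) * b (k + 1) * H k with hg
    have e1 : ∀ k : ℕ, ((k + 1 : ℕ) : ℝ) * b (k + 1) * H ((k + 1) - 1) = g k := by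
      intro k; simp only [hg]; push_cast; ring_nf
    have step1 : ∑ k ∈ range (N + 1), (k : ℝ) * b k * H (k - 1) = ∑ k ∈ range N, g k := by
      rw [Finset.sum_range_succ' (fun k => (k : ℝ) * b k * H (k - 1)) N,
        Finset.sum_congr rfl (fun k _ => e1 k)]
      simp
    have extN : ∑ k ∈ range (N + 1), g k = ∑ k ∈ range N, g k := by
      rw [Finset.sum_range_succ, hg]
      simp [hb1]
    have e2 : ∀ k : ℕ, g (k + 1) = ((k : ℝ) + 2) * b (k + 2) * H (k + 1) := by
      intro k; simp only [hg]; push_cast; ring_nf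
    have extN2 : ∑ k ∈ range (N + 1), ((k : ℝ) + 2) * b (k + 2) * H (k + 1)
        = ∑ k ∈ range N, ((k : ℝ) + 2) * b (k + 2) * H (k + 1) := by
      rw [Finset.sum_range_succ]
      simp [hb2]
    calc ∑ k ∈ range (N + 1), (k : ℝ) * b k * H (k - 1)
        = ∑ k ∈ range (N + 1), g k := by rw [step1, extN]
      _ = ∑ k ∈ range N, g (k + 1) + g 0 := Finset.sum_range_succ' g N
      _ = ∑ k ∈ range N, ((k : ℝ) + 2) * b (k + 2) * H (k + 1) + g 0 := by
          rw [Finset.sum_congr rfl (fun k _ => e2 k)]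
      _ = b 1 * H 0 + ∑ k ∈ range (N + 1), ((k : ℝ) + 2) * b (k + 2) * H (k + 1) := by
          rw [extN2, hg]
          push_cast
          ring
  rw [hS1, hS3]
  have e2 : ∑ k ∈ range (N + 1), c (k + 1) * H (k + 1)
      = ∑ k ∈ range (N + 1),
        (b k + μ * b (k + 1) + ((k : ℝ) + 2) * b (k + 2)) * H (k + 1) := by
    refine Finset.sum_congr rfl (fun k _ => ?_)
    rw [hcs k]
  have merge : ∑ k ∈ range (N + 1),
        (b k + μ * b (k + 1) + ((k : ℝ) + 2) * b (k + 2)) * H (k + 1)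
      = ∑ k ∈ range (N + 1), μ * b (k + 1) * H (k + 1)
        + ∑ k ∈ range (N + 1), b k * H (k + 1)
        + ∑ k ∈ range (N + 1), ((k : ℝ) + 2) * b (k + 2) * H (k + 1) := by
    rw [← Finset.sum_add_distrib, ← Finset.sum_add_distrib]
    refine Finset.sum_congr rfl (fun k _ => ?_)
    ring
  rw [Finset.sum_range_succ' (fun k => c k * H k) (N + 1), hc0, e2, merge]
  ring

end HFC

open Finset in
/-- Recurrence for the Hermite–Fourier coefficients
`q_{N,k} = (1/√k!) ∫ Q_N·He_k dN(0,1)` of the conditional product moments `Q_N`: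
`q_{N+1,k} = √k ρ^{k-1} q_{N,k-1} + μ ρ^k q_{N,k} + √(k+1) ρ^{k+1} q_{N,k+1}`
(with the convention `q_{N,-1} = 0`; for `k = 0` the first term vanishes since
`√0 = 0`), together with `q_{0,0} = 1`, `q_{0,k} = 0` for `k ≥ 1`, and
`q_{N,k} = 0` for `k > N`. -/
theorem hermite_fourier_coefficients_recurrence
    (μ ρ : ℝ) (hρ0 : 0 < ρ) (hρ1 : ρ < 1)
    (γ : ℝ) (hγ : γ = Real.sqrt (1 - ρ ^ 2))
    (Q : ℕ → ℝ → ℝ) (hQ0 : ∀ x, Q 0 x = 1)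
    (hQ : ∀ N x, Q (N + 1) x
      = (μ + x) * ∫ y, Q N (ρ * x + γ * y) ∂(gaussianReal 0 1))
    (q : ℕ → ℕ → ℝ)
    (hq : ∀ N k, q N k = (1 / Real.sqrt (Nat.factorial k))
      * ∫ x, Q N x * (Polynomial.aeval x (Polynomial.hermite k) : ℝ)
          ∂(gaussianReal 0 1)) :
    (∀ N k, q (N + 1) k
        = Real.sqrt k * ρ ^ (k - 1) * q N (k - 1)
          + μ * ρ ^ k * q N k
          + Real.sqrt (k + 1) * ρ ^ (k + 1) * q N (k + 1)) ∧
    q 0 0 = 1 ∧ (∀ k, 1 ≤ k → q 0 k = 0) ∧ (∀ N k, N < k → q N k = 0) := by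
    classical
  have hγ2 : γ ^ 2 = 1 - ρ ^ 2 := by
    rw [hγ, Real.sq_sqrt]
    nlinarith
  set Pn : ℕ → Polynomial ℝ :=
    fun N => ∑ k ∈ range (N + 1), Polynomial.C (HFC.a μ ρ N k) * HFC.Hr k with hPn
  -- Q N is given by the polynomial Pn N
  have hQeq : ∀ N x, Q N x = (Pn N).eval x := by
    intro N
    induction N with
    | zero =>
        intro x
        rw [hQ0, hPn]
        simp [HFC.Hr_zero, HFC.a_zero_zero]
    | succ N ih =>
        intro x
        rw [hQ N x]
        simp only [ih]
        have hint : ∀ y : ℝ, (Pn N).eval (ρ * x + γ * y)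
            = ∑ k ∈ range (N + 1), HFC.a μ ρ N k
              * ((HFC.Hr k).comp (Polynomial.C (ρ * x) + Polynomial.C γ * Polynomial.X)).eval y := by
          intro y
          rw [hPn]
          rw [Polynomial.eval_finset_sum]
          refine Finset.sum_congr rfl (fun k _ => ?_)
          rw [Polynomial.eval_mul, Polynomial.eval_C, Polynomial.eval_comp]
          simp
        simp only [hint]
        rw [integral_finset_sum _ (fun k _ => (HFC.integrable_poly_G _).const_mul _)]
        have hterm : ∀ k ∈ range (N + 1),
            (∫ y, HFC.a μ ρ N k
              * ((HFC.Hr k).comp (Polynomial.C (ρ * x) + Polynomial.C γ * Polynomial.X)).eval y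
                ∂(gaussianReal 0 1))
            = (HFC.a μ ρ N k * ρ ^ k) * (HFC.Hr k).eval x := by
          intro k _
          rw [integral_const_mul, HFC.intG, HFC.Sm ρ γ hγ2 k x]
          ring
        rw [Finset.sum_congr rfl hterm]
        have hkey := HFC.key_sum μ x (fun k => HFC.a μ ρ N k * ρ ^ k) (HFC.a μ ρ (N + 1))
          (fun k => (HFC.Hr k).eval x) N
          (by show HFC.a μ ρ N (N + 1) * ρ ^ (N + 1) = 0
              rw [HFC.a_eq_zero μ ρ N (N + 1) (by omega)]; ring)
          (by show HFC.a μ ρ N (N + 2) * ρ ^ (N + 2) = 0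
              rw [HFC.a_eq_zero μ ρ N (N + 2) (by omega)]; ring)
          (fun k => by
            have := congrArg (Polynomial.eval x) (HFC.X_mul_Hr k)
            simpa using this)
          (by show HFC.a μ ρ (N + 1) 0
                = μ * (HFC.a μ ρ N 0 * ρ ^ 0) + HFC.a μ ρ N 1 * ρ ^ 1
              rw [HFC.a_succ_zero]; ring)
          (fun k => by
            show HFC.a μ ρ (N + 1) (k + 1)
              = HFC.a μ ρ N k * ρ ^ k + μ * (HFC.a μ ρ N (k + 1) * ρ ^ (k + 1))
                + ((k : ℝ) + 2) * (HFC.a μ ρ N (k + 2) * ρ ^ (k + 2))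
            rw [HFC.a_succ_succ]; ring)
        rw [hkey, hPn]
        rw [Polynomial.eval_finset_sum]
        refine Finset.sum_congr rfl (fun k _ => ?_)
        rw [Polynomial.eval_mul, Polynomial.eval_C]
  -- value of the coefficients
  have hqval : ∀ N k, q N k = Real.sqrt (Nat.factorial k) * HFC.a μ ρ N k := by
    intro N k
    rw [hq N k]
    have h1 : (fun x => Q N x * (Polynomial.aeval x (Polynomial.hermite k) : ℝ))
        = fun x => (Pn N * HFC.Hr k).eval x := by
      funext x
      rw [hQeq N x, HFC.aeval_eq_eval_Hr, Polynomial.eval_mul]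
    rw [h1, HFC.intG]
    have h3 : Pn N * HFC.Hr k
        = ∑ j ∈ range (N + 1), Polynomial.C (HFC.a μ ρ N j) * (HFC.Hr j * HFC.Hr k) := by
      rw [hPn, Finset.sum_mul]
      exact Finset.sum_congr rfl (fun j _ => by rw [mul_assoc])
    have e4 : ∀ j : ℕ, HFC.J (Polynomial.C (HFC.a μ ρ N j) * (HFC.Hr j * HFC.Hr k))
        = if j = k then HFC.a μ ρ N j * (Nat.factorial k : ℝ) else 0 := by
      intro j
      rw [HFC.J_smul, HFC.J_Hr_mul_Hr]
      split <;> ring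
    rw [h3, HFC.J_sum, Finset.sum_congr rfl (fun j _ => e4 j),
      Finset.sum_ite_eq' (range (N + 1)) k (fun j => HFC.a μ ρ N j * (Nat.factorial k : ℝ))]
    have hsq : Real.sqrt (Nat.factorial k) * Real.sqrt (Nat.factorial k)
        = (Nat.factorial k : ℝ) :=
      Real.mul_self_sqrt (by positivity)
    have hne : Real.sqrt (Nat.factorial k) ≠ 0 := by positivity
    by_cases hk : k ∈ range (N + 1)
    · rw [if_pos hk]
      field_simp
      linear_combination (-HFC.a μ ρ N k) * hsq
    · rw [if_neg hk, HFC.a_eq_zero μ ρ N k (by simpa using hk)]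
      ring
  refine ⟨?_, ?_, ?_, ?_⟩
  · intro N k
    cases k with
    | zero =>
        rw [show (0:ℕ) - 1 = 0 from rfl, hqval, hqval, hqval, HFC.a_succ_zero]
        simp [Nat.factorial]
    | succ k =>
        rw [hqval, hqval, hqval, hqval, HFC.a_succ_succ]
        have hf1 : (Nat.factorial (k + 1) : ℝ) = ((k : ℝ) + 1) * (Nat.factorial k : ℝ) := by
          rw [Nat.factorial_succ]; push_cast; ring
        have hf2 : (Nat.factorial (k + 2) : ℝ) = ((k : ℝ) + 2) * (Nat.factorial (k + 1) : ℝ) := by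
          rw [Nat.factorial_succ (k + 1)]; push_cast; ring
        have hs1 : Real.sqrt (Nat.factorial (k + 1))
            = Real.sqrt ((k : ℝ) + 1) * Real.sqrt (Nat.factorial k) := by
          rw [hf1, Real.sqrt_mul (by positivity)]
        have hs2 : Real.sqrt (Nat.factorial (k + 2))
            = Real.sqrt ((k : ℝ) + 2) * Real.sqrt (Nat.factorial (k + 1)) := by
          rw [hf2, Real.sqrt_mul (by positivity)]
        have h22 : Real.sqrt ((k : ℝ) + 2) * Real.sqrt ((k : ℝ) + 2) = (k : ℝ) + 2 :=
          Real.mul_self_sqrt (by positivity)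
        have hcast1 : Real.sqrt ((k + 1 : ℕ) : ℝ) = Real.sqrt ((k : ℝ) + 1) := by
          push_cast; ring_nf
        have hksub : (k + 1) - 1 = k := rfl
        rw [hksub, hcast1, hs1]
        have hcast2 : ((k : ℝ) + 1 + 1) = ((k : ℝ) + 2) := by ring
        rw [show ((k + 1 : ℕ) : ℝ) + 1 = (k : ℝ) + 2 by push_cast; ring]
        rw [hs2, hs1]
        linear_combination (-(ρ ^ (k + 2) * HFC.a μ ρ N (k + 2)
          * Real.sqrt ((k : ℝ) + 1) * Real.sqrt (Nat.factorial k))) * h22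
  · rw [hqval, HFC.a_zero_zero]
    simp
  · intro k hk
    match k, hk with
    | k + 1, _ =>
        rw [hqval, HFC.a_zero_succ]
        ring
  · intro N k hNk
    rw [hqval, HFC.a_eq_zero μ ρ N k hNk]
    ring
end

section
/- Let μ > 0 and 0 < ρ < 1, set γ = √(1−ρ²), let ν(x) = e^{−x²/2}/√(2π), let He_k denote the probabilists' Hermite polynomial, define Q_N : ℝ → ℝ recursively by Q_0 ≡ 1 and Q_{N+1}(x) = (μ+x) ∫_ℝ Q_N(ρx + γy) ν(y) dy, and set q_{N,k} := (1/√(k!)) ∫_ℝ Q_N(x)·He_k(x) ν(x) dx. Then q_{N,k} ≥ 0 for all integers N ≥ 0 and k ≥ 0. -/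
open MeasureTheory ProbabilityTheory Polynomial Finset
open scoped NNReal ENNReal Nat

namespace HFCaux

noncomputable def gw (x : ℝ) : ℝ := gaussianPDFReal 0 1 x

lemma gw_eq (x : ℝ) : gw x = (Real.sqrt (2 * Real.pi))⁻¹ * Real.exp (-(1/2) * x ^ 2) := by
  rw [gw, gaussianPDFReal]
  push_cast
  norm_num
  left
  ring

lemma gw_nonneg (x : ℝ) : 0 ≤ gw x := gaussianPDFReal_nonneg 0 1 x

lemma integral_gauss (f : ℝ → ℝ) :
    ∫ x, f x ∂(gaussianReal 0 1) = ∫ x, gw x * f x := by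
  rw [gaussianReal_of_var_ne_zero 0 one_ne_zero]
  have h1 : gaussianPDF 0 1 = fun x => ((Real.toNNReal (gaussianPDFReal 0 1 x) : ℝ≥0) : ℝ≥0∞) := rfl
  rw [h1, integral_withDensity_eq_integral_smul
    ((measurable_gaussianPDFReal 0 1).real_toNNReal) f]
  congr 1 with x
  simp [NNReal.smul_def, Real.coe_toNNReal _ (gaussianPDFReal_nonneg 0 1 x), gw]

lemma integrable_pow_exp (n : ℕ) :
    Integrable (fun x : ℝ => x ^ n * Real.exp (-(1/2) * x ^ 2)) := by
  have hbound : ∀ x : ℝ, ‖x ^ n * Real.exp (-(1/2) * x ^ 2)‖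
      ≤ (n ! : ℝ) * Real.exp 1 * Real.exp (-(1/4 : ℝ) * x ^ 2) := by
    intro x
    have h1 : |x| ^ n ≤ (n ! : ℝ) * Real.exp |x| := by
      have h := Real.pow_div_factorial_le_exp |x| (abs_nonneg x) n
      have hn : (0:ℝ) < n ! := by positivity
      calc |x| ^ n = (|x| ^ n / n !) * n ! := by field_simp
        _ ≤ Real.exp |x| * n ! := by
            apply mul_le_mul_of_nonneg_right h hn.le
        _ = (n ! : ℝ) * Real.exp |x| := by ring
    have h2 : Real.exp |x| * Real.exp (-(1/2) * x ^ 2)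
        ≤ Real.exp 1 * Real.exp (-(1/4 : ℝ) * x ^ 2) := by
      rw [← Real.exp_add, ← Real.exp_add]
      apply Real.exp_le_exp.2
      have hx2 : |x| ^ 2 = x ^ 2 := sq_abs x
      nlinarith [sq_nonneg (|x| / 2 - 1), abs_nonneg x]
    calc ‖x ^ n * Real.exp (-(1/2) * x ^ 2)‖
        = |x| ^ n * Real.exp (-(1/2) * x ^ 2) := by
          rw [norm_mul, norm_pow, Real.norm_eq_abs, Real.norm_eq_abs,
            abs_of_pos (Real.exp_pos _)]
      _ ≤ ((n ! : ℝ) * Real.exp |x|) * Real.exp (-(1/2) * x ^ 2) := by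
          apply mul_le_mul_of_nonneg_right h1 (Real.exp_pos _).le
      _ = (n ! : ℝ) * (Real.exp |x| * Real.exp (-(1/2) * x ^ 2)) := by ring
      _ ≤ (n ! : ℝ) * (Real.exp 1 * Real.exp (-(1/4 : ℝ) * x ^ 2)) := by
          apply mul_le_mul_of_nonneg_left h2 (by positivity)
      _ = (n ! : ℝ) * Real.exp 1 * Real.exp (-(1/4 : ℝ) * x ^ 2) := by ring
  apply Integrable.mono' (((integrable_exp_neg_mul_sq (by norm_num : (0:ℝ) < 1/4)).const_mul
    ((n ! : ℝ) * Real.exp 1)))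
  · apply Measurable.aestronglyMeasurable
    exact (measurable_id.pow_const n).mul
      (((measurable_id.pow_const 2).const_mul (-(1/2))).exp)
  · exact Filter.Eventually.of_forall (fun x => by simpa [mul_assoc] using hbound x)

lemma integrable_poly_exp (p : Polynomial ℝ) :
    Integrable (fun x : ℝ => p.eval x * Real.exp (-(1/2) * x ^ 2)) := by
  induction p using Polynomial.induction_on' with
  | add p q hp hq =>
      simpa [add_mul, Pi.add_def] using hp.add hq
  | monomial n a =>
      simpa [Polynomial.eval_monomial, mul_assoc] using (integrable_pow_exp n).const_mul a

lemma integrable_gw_poly (p : Polynomial ℝ) :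
    Integrable (fun x : ℝ => gw x * p.eval x) := by
  have h := (integrable_poly_exp p).const_mul (Real.sqrt (2 * Real.pi))⁻¹
  apply h.congr
  exact Filter.Eventually.of_forall (fun x => by simp only [gw_eq]; ring)

/-- Gaussian expectation of a polynomial. -/
noncomputable def E (p : Polynomial ℝ) : ℝ := ∫ x, gw x * p.eval x

lemma E_eq (p : Polynomial ℝ) :
    E p = (Real.sqrt (2 * Real.pi))⁻¹ * ∫ x, p.eval x * Real.exp (-(1/2) * x ^ 2) := by
  rw [E, ← integral_const_mul]
  congr 1 with x
  rw [gw_eq]; ring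

lemma E_add (p q : Polynomial ℝ) : E (p + q) = E p + E q := by
  unfold E
  simp only [Polynomial.eval_add, mul_add]
  exact integral_add (integrable_gw_poly p) (integrable_gw_poly q)

lemma E_sub (p q : Polynomial ℝ) : E (p - q) = E p - E q := by
  unfold E
  simp only [Polynomial.eval_sub, mul_sub]
  exact integral_sub (integrable_gw_poly p) (integrable_gw_poly q)

lemma E_const_mul (c : ℝ) (p : Polynomial ℝ) : E (C c * p) = c * E p := by
  unfold E
  simp only [Polynomial.eval_mul, Polynomial.eval_C]
  rw [← integral_const_mul]
  congr 1 with x; ring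

lemma E_one : E 1 = 1 := by
  unfold E
  simp only [Polynomial.eval_one, mul_one]
  exact integral_gaussianPDFReal_eq_one 0 one_ne_zero

lemma E_ibp (p : Polynomial ℝ) : E (X * p) = E (derivative p) := by
  have key : ∫ x, ((derivative p).eval x - (X * p).eval x) * Real.exp (-(1/2) * x ^ 2) = 0 := by
    apply integral_eq_zero_of_hasDerivAt_of_integrable
      (f := fun x => p.eval x * Real.exp (-(1/2) * x ^ 2))
    · intro x
      have h1 : HasDerivAt (fun x : ℝ => -(1/2) * x ^ 2) (-x) x := by
        simpa using (hasDerivAt_pow 2 x).const_mul (-(1/2) : ℝ)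
      have h2 := h1.exp
      have h3 : HasDerivAt (fun x => p.eval x * Real.exp (-(1/2) * x ^ 2)) _ x :=
        (p.hasDerivAt x).mul h2
      refine h3.congr_deriv ?_
      simp only [Polynomial.eval_sub, Polynomial.eval_mul, Polynomial.eval_X]
      ring
    · have h := integrable_poly_exp (derivative p - X * p)
      apply h.congr
      exact Filter.Eventually.of_forall (fun x => by simp [Polynomial.eval_sub])
    · exact integrable_poly_exp _
  have h2 : (∫ x, (derivative p).eval x * Real.exp (-(1/2) * x ^ 2))
      - ∫ x, (X * p).eval x * Real.exp (-(1/2) * x ^ 2) = 0 := by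
    rw [← integral_sub (integrable_poly_exp _) (integrable_poly_exp _), ← key]
    congr 1 with x
    ring
  rw [E_eq, E_eq]
  have h3 : (∫ x, (X * p).eval x * Real.exp (-(1/2) * x ^ 2))
      = ∫ x, (derivative p).eval x * Real.exp (-(1/2) * x ^ 2) := by linarith
  rw [h3]



/-- The real Hermite polynomial. -/
noncomputable def Hr (n : ℕ) : Polynomial ℝ := (Polynomial.hermite n).map (Int.castRingHom ℝ)

lemma Hr_zero : Hr 0 = 1 := by simp [Hr]

lemma Hr_succ (n : ℕ) : Hr (n + 1) = X * Hr n - derivative (Hr n) := by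
  rw [Hr, hermite_succ, Polynomial.map_sub, Polynomial.map_mul, Polynomial.map_X,
    ← derivative_map]
  rfl

lemma Hr_one : Hr 1 = X := by
  rw [Hr_succ, Hr_zero]
  simp

lemma derivative_Hr_succ (n : ℕ) : derivative (Hr (n + 1)) = C ((n : ℝ) + 1) * Hr n := by
  induction n with
  | zero => rw [Hr_one, Hr_zero]; simp
  | succ n ih =>
      have hd : derivative (Hr n) = X * Hr n - Hr (n + 1) := by rw [Hr_succ]; ring
      rw [Hr_succ (n+1), derivative_sub, derivative_mul, derivative_X, one_mul, ih,
        derivative_mul, derivative_C, zero_mul, zero_add, hd]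
      push_cast
      ring_nf
      rw [show C (2 + (n:ℝ)) = C (1 + (n:ℝ)) + 1 by rw [← C_1, ← C_add]; ring]
      ring

lemma derivative_Hr (n : ℕ) : derivative (Hr n) = C (n : ℝ) * Hr (n - 1) := by
  cases n with
  | zero => simp [Hr_zero]
  | succ n => rw [derivative_Hr_succ]; push_cast; simp

lemma aeval_hermite_eq_Hr (k : ℕ) (x : ℝ) :
    (Polynomial.aeval x (Polynomial.hermite k) : ℝ) = (Hr k).eval x := by
  rw [Polynomial.aeval_def, Hr, Polynomial.eval_map]
  rfl

lemma X_mul_Hr_eval (j : ℕ) (x : ℝ) :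
    x * (Hr j).eval x = (Hr (j + 1)).eval x + (j : ℝ) * (Hr (j - 1)).eval x := by
  have h := Hr_succ j
  have : (Hr (j+1)).eval x = x * (Hr j).eval x - (derivative (Hr j)).eval x := by
    rw [h]; simp
  rw [this, derivative_Hr]
  simp


lemma natDegree_Hr (n : ℕ) : (Hr n).natDegree = n := by
  rw [Hr]
  rw [(hermite_monic n).natDegree_map]
  exact natDegree_hermite

lemma iterate_derivative_Hr (m n : ℕ) :
    derivative^[m] (Hr (n + m)) = C (((n + m).descFactorial m : ℕ) : ℝ) * Hr n := by
  induction m with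
  | zero => simp
  | succ m ih =>
      rw [Function.iterate_succ_apply, show n + (m+1) = (n + m) + 1 by ring,
        derivative_Hr_succ, Polynomial.iterate_derivative_C_mul, ih,
        ← mul_assoc, ← C_mul, Nat.succ_descFactorial_succ]
      push_cast
      ring_nf

lemma derivative_iterate_zero (m : ℕ) : derivative^[m] (0 : Polynomial ℝ) = 0 := by
  induction m with
  | zero => rfl
  | succ m ih => rw [Function.iterate_succ_apply, derivative_zero, ih]

lemma E_hermite_mul (k : ℕ) (p : Polynomial ℝ) :
    E (Hr k * p) = E (derivative^[k] p) := by
  induction k generalizing p with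
  | zero => rw [Hr_zero, one_mul]; rfl
  | succ k ih =>
      have h1 : Hr (k+1) * p = X * (Hr k * p) - derivative (Hr k) * p := by
        rw [Hr_succ]; ring
      rw [h1, E_sub, E_ibp, derivative_mul]
      have h2 : E (derivative (Hr k) * p + Hr k * derivative p) - E (derivative (Hr k) * p)
          = E (Hr k * derivative p) := by
        rw [E_add]; ring
      rw [h2, ih]
      rw [Function.iterate_succ_apply]

lemma E_Hr (n : ℕ) : E (Hr n) = if n = 0 then 1 else 0 := by
  cases n with
  | zero => simp [Hr_zero, E_one]
  | succ n =>
      have h := E_hermite_mul (n+1) 1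
      rw [mul_one] at h
      rw [h, Function.iterate_succ_apply, derivative_one, derivative_iterate_zero]
      simp [E]

lemma E_Hr_mul_Hr (j k : ℕ) : E (Hr j * Hr k) = if j = k then (k ! : ℝ) else 0 := by
  rcases le_or_gt k j with h | h
  · obtain ⟨m, rfl⟩ : ∃ m, j = m + k := ⟨j - k, by omega⟩
    rw [mul_comm, E_hermite_mul, iterate_derivative_Hr, E_const_mul, E_Hr]
    rcases Nat.eq_zero_or_pos m with rfl | hm
    · simp [Nat.descFactorial_self]
    · have h1 : ¬ (m + k = k) := by omega
      have h2 : m ≠ 0 := by omega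
      simp [h1, h2]
  · obtain ⟨m, hm, rfl⟩ : ∃ m, 0 < m ∧ k = m + j := ⟨k - j, by omega, by omega⟩
    rw [E_hermite_mul, iterate_derivative_Hr, E_const_mul, E_Hr]
    have h1 : ¬ (j = m + j) := by omega
    have h2 : m ≠ 0 := by omega
    simp [h1, h2]


lemma E_zero : E 0 = 0 := by simp [E]

lemma E_C (c : ℝ) : E (C c) = c := by
  have h := E_const_mul c 1
  rw [mul_one] at h
  rw [h, E_one, mul_one]

lemma E_X : E X = 0 := by
  have h := E_ibp 1
  rw [mul_one, derivative_one] at h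
  rw [h, E_zero]

lemma E_comp_linear {ρ γ : ℝ} (hργ : ρ ^ 2 + γ ^ 2 = 1) (x : ℝ) : ∀ k : ℕ,
    E ((Hr k).comp (C (ρ * x) + C γ * X)) = ρ ^ k * (Hr k).eval x := by
  set L : Polynomial ℝ := C (ρ * x) + C γ * X with hLdef
  have hdL : derivative L = C γ := by simp [hLdef]
  have hP : ∀ k : ℕ,
      (E ((Hr k).comp L) = ρ ^ k * (Hr k).eval x)
      ∧ (E ((Hr (k+1)).comp L) = ρ ^ (k+1) * (Hr (k+1)).eval x) := by
    intro k
    induction k with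
    | zero =>
        constructor
        · rw [Hr_zero, one_comp, E_one]
          simp
        · rw [Hr_one, X_comp, hLdef, E_add, E_C, E_const_mul, E_X]
          simp [Hr_one]
    | succ k ih =>
        obtain ⟨hB, hA⟩ := ih
        refine ⟨hA, ?_⟩
        have hcomp : (Hr (k+2)).comp L
            = C (ρ * x) * ((Hr (k+1)).comp L) + C γ * (X * ((Hr (k+1)).comp L))
              - C ((k : ℝ) + 1) * ((Hr k).comp L) := by
          rw [show Hr (k+2) = X * Hr (k+1) - derivative (Hr (k+1)) from Hr_succ (k+1),
            sub_comp, mul_comp, X_comp, derivative_Hr_succ, mul_comp, C_comp, hLdef]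
          ring
        have hdA : derivative ((Hr (k+1)).comp L)
            = C γ * (C ((k : ℝ) + 1) * ((Hr k).comp L)) := by
          rw [derivative_comp, hdL, derivative_Hr_succ, mul_comp, C_comp]
        have hXA : E (X * ((Hr (k+1)).comp L)) = γ * (((k : ℝ) + 1) * E ((Hr k).comp L)) := by
          rw [E_ibp, hdA, E_const_mul, E_const_mul]
        have heval : (Hr (k+2)).eval x
            = x * (Hr (k+1)).eval x - ((k : ℝ) + 1) * (Hr k).eval x := by
          rw [show Hr (k+2) = X * Hr (k+1) - derivative (Hr (k+1)) from Hr_succ (k+1),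
            derivative_Hr_succ]
          simp
        rw [hcomp, E_sub, E_add, E_const_mul, E_const_mul, E_const_mul, hXA, hA, hB, heval]
        have hkk : ρ ^ (k+2) = ρ ^ k * ρ ^ 2 := by ring
        linear_combination (((k : ℝ) + 1) * (ρ ^ k) * ((Hr k).eval x)) * hργ
  exact fun k => (hP k).1


lemma cone_step (μ : ℝ) (K : ℕ) (c : ℕ → ℝ) (hc : ∀ j, K ≤ j → c j = 0) (x : ℝ) :
    (μ + x) * ∑ j ∈ range K, c j * (Hr j).eval x
    = ∑ j ∈ range (K+1),
        (μ * c j + ((j:ℝ)+1) * c (j+1) + (if j = 0 then 0 else c (j-1))) * (Hr j).eval x := by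
  have hL : (μ + x) * ∑ j ∈ range K, c j * (Hr j).eval x
      = (∑ j ∈ range K, μ * c j * (Hr j).eval x)
        + (∑ j ∈ range K, c j * (Hr (j+1)).eval x)
        + (∑ j ∈ range K, (j:ℝ) * c j * (Hr (j-1)).eval x) := by
    rw [Finset.mul_sum, ← Finset.sum_add_distrib, ← Finset.sum_add_distrib]
    apply Finset.sum_congr rfl
    intro j _
    have h := X_mul_Hr_eval j x
    have : (μ + x) * (c j * (Hr j).eval x)
        = μ * c j * (Hr j).eval x + c j * (x * (Hr j).eval x) := by ring
    rw [this, h]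
    ring
  have hR : ∑ j ∈ range (K+1),
      (μ * c j + ((j:ℝ)+1) * c (j+1) + (if j = 0 then 0 else c (j-1))) * (Hr j).eval x
      = (∑ j ∈ range (K+1), μ * c j * (Hr j).eval x)
        + (∑ j ∈ range (K+1), ((j:ℝ)+1) * c (j+1) * (Hr j).eval x)
        + (∑ j ∈ range (K+1), (if j = 0 then 0 else c (j-1)) * (Hr j).eval x) := by
    rw [← Finset.sum_add_distrib, ← Finset.sum_add_distrib]
    apply Finset.sum_congr rfl
    intro j _
    ring
  have e1 : ∑ j ∈ range (K+1), μ * c j * (Hr j).eval x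
      = ∑ j ∈ range K, μ * c j * (Hr j).eval x := by
    rw [Finset.sum_range_succ, hc K le_rfl]
    ring
  have e2 : ∑ j ∈ range (K+1), ((j:ℝ)+1) * c (j+1) * (Hr j).eval x
      = ∑ j ∈ range K, (j:ℝ) * c j * (Hr (j-1)).eval x := by
    set f : ℕ → ℝ := fun j => (j:ℝ) * c j * (Hr (j-1)).eval x with hf
    have hstep : ∀ j : ℕ, ((j:ℝ)+1) * c (j+1) * (Hr j).eval x = f (j+1) := by
      intro j
      simp only [hf, Nat.add_sub_cancel]
      push_cast
      ring
    have h1 : ∑ j ∈ range (K+2), f j = (∑ j ∈ range (K+1), f (j+1)) + f 0 :=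
      Finset.sum_range_succ' f (K+1)
    have h2 : ∑ j ∈ range (K+2), f j
        = ((∑ j ∈ range K, f j) + f K) + f (K+1) := by
      rw [Finset.sum_range_succ, Finset.sum_range_succ]
    have hf0 : f 0 = 0 := by simp [hf]
    have hfK : f K = 0 := by simp [hf, hc K le_rfl]
    have hfK1 : f (K+1) = 0 := by simp [hf, hc (K+1) (by omega)]
    calc ∑ j ∈ range (K+1), ((j:ℝ)+1) * c (j+1) * (Hr j).eval x
        = ∑ j ∈ range (K+1), f (j+1) := by
          apply Finset.sum_congr rfl
          intro j _
          exact hstep j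
      _ = ∑ j ∈ range K, f j := by
          linarith [h1, h2, hf0, hfK, hfK1]
  have e3 : ∑ j ∈ range (K+1), (if j = 0 then 0 else c (j-1)) * (Hr j).eval x
      = ∑ j ∈ range K, c j * (Hr (j+1)).eval x := by
    set g : ℕ → ℝ := fun j => (if j = 0 then 0 else c (j-1)) * (Hr j).eval x with hg
    have h1 : ∑ j ∈ range (K+1), g j = (∑ j ∈ range K, g (j+1)) + g 0 :=
      Finset.sum_range_succ' g K
    have hg0 : g 0 = 0 := by simp [hg]
    rw [show (∑ j ∈ range (K+1), (if j = 0 then 0 else c (j-1)) * (Hr j).eval x)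
        = ∑ j ∈ range (K+1), g j from rfl, h1, hg0, add_zero]
    apply Finset.sum_congr rfl
    intro j _
    simp [hg]
  rw [hL, hR, e1, e2, e3]
  ring

end HFCaux

open HFCaux Polynomial Finset in
/-- For `μ > 0` and `0 < ρ < 1`, all Hermite–Fourier coefficients
`q_{N,k} = (1/√k!) ∫ Q_N·He_k dN(0,1)` of the conditional product moments `Q_N`
are nonnegative (invariance of the nonnegative cone under the transfer operator). -/
theorem hermite_fourier_coefficients_nonneg
    (μ ρ : ℝ) (hμ : 0 < μ) (hρ0 : 0 < ρ) (hρ1 : ρ < 1)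
    (γ : ℝ) (hγ : γ = Real.sqrt (1 - ρ ^ 2))
    (Q : ℕ → ℝ → ℝ) (hQ0 : ∀ x, Q 0 x = 1)
    (hQ : ∀ N x, Q (N + 1) x
      = (μ + x) * ∫ y, Q N (ρ * x + γ * y) ∂(gaussianReal 0 1))
    (q : ℕ → ℕ → ℝ)
    (hq : ∀ N k, q N k = (1 / Real.sqrt (Nat.factorial k))
      * ∫ x, Q N x * (Polynomial.aeval x (Polynomial.hermite k) : ℝ)
          ∂(gaussianReal 0 1)) :
    ∀ N k, 0 ≤ q N k := by
  have hγ2 : ρ ^ 2 + γ ^ 2 = 1 := by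
    rw [hγ, Real.sq_sqrt (by nlinarith : (0:ℝ) ≤ 1 - ρ ^ 2)]
    ring
  have hrep : ∀ N, ∃ c : ℕ → ℝ, (∀ j, 0 ≤ c j) ∧ (∀ j, N + 1 ≤ j → c j = 0) ∧
      (∀ x, Q N x = ∑ j ∈ range (N+1), c j * (Hr j).eval x) := by
    intro N
    induction N with
    | zero =>
        refine ⟨fun j => if j = 0 then 1 else 0, ?_, ?_, ?_⟩
        · intro j
          dsimp only
          split <;> norm_num
        · intro j hj
          dsimp only
          rw [if_neg (by omega : ¬ j = 0)]
        · intro x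
          rw [hQ0 x, Finset.sum_range_one, Hr_zero]
          simp
    | succ N ih =>
        obtain ⟨c, hc0, hcs, hcr⟩ := ih
        have hin : ∀ x, (∫ y, Q N (ρ * x + γ * y) ∂(gaussianReal 0 1))
            = ∑ j ∈ range (N+1), (c j * ρ ^ j) * (Hr j).eval x := by
          intro x
          rw [integral_gauss]
          have hpt : (fun y => gw y * Q N (ρ * x + γ * y))
              = fun y => ∑ j ∈ range (N+1),
                  c j * (gw y * ((Hr j).comp (C (ρ * x) + C γ * X)).eval y) := by
            funext y
            rw [hcr (ρ * x + γ * y), Finset.mul_sum]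
            apply Finset.sum_congr rfl
            intro j _
            rw [eval_comp]
            simp only [eval_add, eval_mul, eval_C, eval_X]
            ring
          rw [hpt, integral_finset_sum _
            (fun j _ => (integrable_gw_poly _).const_mul _)]
          apply Finset.sum_congr rfl
          intro j _
          rw [MeasureTheory.integral_const_mul,
            show (∫ y, gw y * ((Hr j).comp (C (ρ * x) + C γ * X)).eval y)
              = E ((Hr j).comp (C (ρ * x) + C γ * X)) from rfl,
            E_comp_linear hγ2 x j]
          ring
        set c1 : ℕ → ℝ := fun j => c j * ρ ^ j with hc1
        have hc1s : ∀ j, N + 1 ≤ j → c1 j = 0 := by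
          intro j hj
          simp [hc1, hcs j hj]
        refine ⟨fun j => μ * c1 j + ((j:ℝ)+1) * c1 (j+1) + (if j = 0 then 0 else c1 (j-1)),
          ?_, ?_, ?_⟩
        · intro j
          have h1 : 0 ≤ c1 j := mul_nonneg (hc0 j) (pow_nonneg hρ0.le j)
          have h2 : 0 ≤ c1 (j+1) := mul_nonneg (hc0 _) (pow_nonneg hρ0.le _)
          have h3 : 0 ≤ c1 (j-1) := mul_nonneg (hc0 _) (pow_nonneg hρ0.le _)
          have h4 : (0:ℝ) ≤ (j:ℝ) + 1 := by positivity
          have h5 : (0:ℝ) ≤ if j = 0 then 0 else c1 (j-1) := by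
            split
            · exact le_refl 0
            · exact h3
          dsimp only
          nlinarith [mul_nonneg h4 h2, mul_nonneg hμ.le h1]
        · intro j hj
          dsimp only
          rw [hc1s j (by omega), hc1s (j+1) (by omega), hc1s (j-1) (by omega)]
          simp
        · intro x
          have hbeta : ∑ j ∈ range (N+1), (c j * ρ ^ j) * (Hr j).eval x
              = ∑ j ∈ range (N+1), c1 j * (Hr j).eval x := rfl
          rw [hQ N x, hin x, hbeta, cone_step μ (N+1) c1 hc1s x]
  intro N k
  obtain ⟨c, hc0, hcs, hcr⟩ := hrep N
  rw [hq N k]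
  apply mul_nonneg (by positivity)
  rw [integral_gauss]
  have hpt : (fun x => gw x * (Q N x * (Polynomial.aeval x (Polynomial.hermite k) : ℝ)))
      = fun x => ∑ j ∈ range (N+1), c j * (gw x * (Hr j * Hr k).eval x) := by
    funext x
    rw [hcr x, aeval_hermite_eq_Hr, Finset.sum_mul, Finset.mul_sum]
    apply Finset.sum_congr rfl
    intro j _
    rw [eval_mul]
    ring
  rw [hpt, integral_finset_sum _ (fun j _ => (integrable_gw_poly _).const_mul _)]
  apply Finset.sum_nonneg
  intro j _
  rw [MeasureTheory.integral_const_mul,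
    show (∫ x, gw x * (Hr j * Hr k).eval x) = E (Hr j * Hr k) from rfl,
    E_Hr_mul_Hr j k]
  split
  · exact mul_nonneg (hc0 j) (by positivity)
  · simp
end

section
/- Let μ ∈ ℝ and 0 < ρ < 1, set γ = √(1−ρ²), let ν(x) = e^{−x²/2}/√(2π), and define Q_N : ℝ → ℝ recursively by Q_0 ≡ 1 and Q_{N+1}(x) = (μ+x) ∫_ℝ Q_N(ρx + γy) ν(y) dy. Then for every N ≥ 0 the function Q_N coincides with a polynomial of degree exactly N whose leading coefficient is ρ^{N(N−1)/2}; in particular, lim_{x→+∞} Q_N(x)/x^N = ρ^{N(N−1)/2}. -/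
open MeasureTheory ProbabilityTheory Filter

section Aux
open Real Polynomial

lemma aux_int_pow (k : ℕ) : Integrable (fun y : ℝ => y ^ k) (gaussianReal 0 1) := by
  rw [gaussianReal_of_var_ne_zero 0 one_ne_zero,
    integrable_withDensity_iff (measurable_gaussianPDF 0 1)
      (ae_of_all _ fun x => ENNReal.ofReal_lt_top)]
  have h : ∀ y : ℝ, (gaussianPDF 0 1 y).toReal
      = (Real.sqrt (2 * π))⁻¹ * Real.exp (-(1/2) * y ^ 2) := by
    intro y
    rw [gaussianPDF, ENNReal.toReal_ofReal (gaussianPDFReal_nonneg _ _ _), gaussianPDFReal]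
    push_cast
    rw [mul_one, sub_zero]
    ring_nf
  simp only [h]
  have h2 : Integrable (fun y : ℝ => y ^ k * Real.exp (-(1/2) * y ^ 2)) := by
    have := integrable_rpow_mul_exp_neg_mul_sq (b := 1/2) (by norm_num) (s := (k : ℝ))
      (by exact_mod_cast neg_one_lt_zero.trans_le (Nat.cast_nonneg k))
    simpa [Real.rpow_natCast] using this
  simpa [mul_comm, mul_assoc, mul_left_comm] using h2.const_mul (Real.sqrt (2 * π))⁻¹

lemma aux_R (ρ γ : ℝ) (p : Polynomial ℝ) :
    ∃ R : Polynomial ℝ,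
      (∀ x : ℝ, (∫ y, Polynomial.eval (ρ * x + γ * y) p ∂(gaussianReal 0 1)) = R.eval x)
      ∧ R.degree ≤ (p.natDegree : WithBot ℕ)
      ∧ R.coeff p.natDegree = ρ ^ p.natDegree * p.coeff p.natDegree := by
  classical
  set ν := gaussianReal 0 1 with hν
  set m : ℕ → ℝ := fun k => ∫ y, y ^ k ∂ν with hm
  have hm0 : m 0 = 1 := by simp [hm]
  set d := p.natDegree with hd
  set a : ℕ → ℕ → ℝ :=
    fun n k => p.coeff n * ((n.choose k : ℝ) * ρ ^ k * γ ^ (n - k) * m (n - k)) with ha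
  refine ⟨∑ n ∈ Finset.range (d + 1), ∑ k ∈ Finset.range (n + 1),
      Polynomial.C (a n k) * Polynomial.X ^ k, ?_, ?_, ?_⟩
  · intro x
    have h1 : ∀ y : ℝ, Polynomial.eval (ρ * x + γ * y) p
        = ∑ n ∈ Finset.range (d + 1), ∑ k ∈ Finset.range (n + 1),
            (p.coeff n * (n.choose k : ℝ) * ρ ^ k * x ^ k * γ ^ (n - k)) * y ^ (n - k) := by
      intro y
      rw [Polynomial.eval_eq_sum_range]
      refine Finset.sum_congr rfl fun n _ => ?_
      rw [add_pow, Finset.mul_sum]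
      refine Finset.sum_congr rfl fun k _ => ?_
      rw [mul_pow, mul_pow]
      ring
    simp only [h1]
    rw [integral_finset_sum _ (fun n _ => integrable_finset_sum _
      (fun k _ => (aux_int_pow (n - k)).const_mul _))]
    rw [Polynomial.eval_finset_sum]
    refine Finset.sum_congr rfl fun n _ => ?_
    rw [integral_finset_sum _ (fun k _ => (aux_int_pow (n - k)).const_mul _),
      Polynomial.eval_finset_sum]
    refine Finset.sum_congr rfl fun k _ => ?_
    rw [MeasureTheory.integral_const_mul]
    simp only [Polynomial.eval_mul, Polynomial.eval_C, Polynomial.eval_pow, Polynomial.eval_X, ha]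
    ring
  · refine (Polynomial.degree_sum_le _ _).trans (Finset.sup_le fun n hn => ?_)
    refine (Polynomial.degree_sum_le _ _).trans (Finset.sup_le fun k hk => ?_)
    refine (Polynomial.degree_C_mul_X_pow_le _ _).trans ?_
    have hkd : k ≤ d := le_trans (Nat.lt_succ_iff.mp (Finset.mem_range.mp hk))
      (Nat.lt_succ_iff.mp (Finset.mem_range.mp hn))
    exact_mod_cast Nat.cast_le.mpr hkd
  · simp only [Polynomial.finset_sum_coeff, Polynomial.coeff_C_mul, Polynomial.coeff_X_pow,
      mul_ite, mul_one, mul_zero]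
    have hinner : ∀ n ∈ Finset.range (d + 1),
        (∑ k ∈ Finset.range (n + 1), if d = k then a n k else 0)
          = if n = d then a d d else 0 := by
      intro n hn
      by_cases hnd : n = d
      · subst hnd
        simp [Finset.sum_ite_eq, Nat.lt_succ_iff]
      · have hz : ∀ k ∈ Finset.range (n + 1), (if d = k then a n k else 0) = 0 := by
          intro k hk
          have hkn : k ≤ n := Nat.lt_succ_iff.mp (Finset.mem_range.mp hk)
          have hnd' : n < d := lt_of_le_of_ne (Nat.lt_succ_iff.mp (Finset.mem_range.mp hn)) hnd
          have : d ≠ k := by omega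
          simp [this]
        rw [Finset.sum_congr rfl hz, Finset.sum_const, smul_zero]
        simp [hnd]
    rw [Finset.sum_congr rfl hinner, Finset.sum_ite_eq']
    simp [ha, hm0, Nat.choose_self, mul_comm]

lemma aux_exp (N : ℕ) : (N + 1) * ((N + 1) - 1) / 2 = N + N * (N - 1) / 2 := by
  rw [← Nat.choose_two_right, ← Nat.choose_two_right,
    show (2 : ℕ) = 1 + 1 from rfl, Nat.choose_succ_succ, Nat.choose_one_right]

lemma aux_tendsto (p : Polynomial ℝ) (N : ℕ) (hdeg : p.degree = (N : ℕ)) :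
    Tendsto (fun x : ℝ => p.eval x / x ^ N) atTop (nhds p.leadingCoeff) := by
  have hN : p.natDegree = N := Polynomial.natDegree_eq_of_degree_eq_some hdeg
  have h := Polynomial.isEquivalent_atTop_lead p
  rw [hN] at h
  have h2 := h.div (Asymptotics.IsEquivalent.refl (u := fun x : ℝ => x ^ N))
  refine h2.symm.tendsto_nhds ?_
  have hev : (fun x : ℝ => p.leadingCoeff * x ^ N / x ^ N)
      =ᶠ[atTop] fun _ => p.leadingCoeff := by
    filter_upwards [eventually_ne_atTop (0 : ℝ)] with x hx
    rw [mul_div_assoc, div_self (pow_ne_zero _ hx), mul_one]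
  exact Tendsto.congr' hev.symm tendsto_const_nhds

end Aux

/-- Each conditional product moment `Q_N` is a polynomial of
degree exactly `N` with leading coefficient `ρ^{N(N-1)/2}`; in particular
`Q_N(x)/x^N → ρ^{N(N-1)/2}` as `x → +∞`. -/
theorem Q_is_polynomial_leading_coeff
    (μ ρ : ℝ) (hρ0 : 0 < ρ) (hρ1 : ρ < 1)
    (γ : ℝ) (hγ : γ = Real.sqrt (1 - ρ ^ 2))
    (Q : ℕ → ℝ → ℝ) (hQ0 : ∀ x, Q 0 x = 1)
    (hQ : ∀ N x, Q (N + 1) x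
      = (μ + x) * ∫ y, Q N (ρ * x + γ * y) ∂(gaussianReal 0 1)) :
    ∀ N : ℕ,
      (∃ p : Polynomial ℝ, (∀ x, Q N x = p.eval x)
        ∧ p.degree = (N : ℕ) ∧ p.leadingCoeff = ρ ^ (N * (N - 1) / 2)) ∧
      Tendsto (fun x : ℝ => Q N x / x ^ N) atTop (nhds (ρ ^ (N * (N - 1) / 2))) := by
  suffices hP : ∀ N : ℕ, ∃ p : Polynomial ℝ, (∀ x, Q N x = p.eval x)
      ∧ p.degree = (N : ℕ) ∧ p.leadingCoeff = ρ ^ (N * (N - 1) / 2) by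
    intro N
    obtain ⟨p, hp1, hp2, hp3⟩ := hP N
    refine ⟨⟨p, hp1, hp2, hp3⟩, ?_⟩
    have ht := aux_tendsto p N hp2
    rw [hp3] at ht
    exact ht.congr fun x => by rw [hp1 x]
  intro N
  induction N with
  | zero =>
    exact ⟨1, fun x => by simp [hQ0], by simp, by simp⟩
  | succ N ih =>
    obtain ⟨p, hp1, hp2, hp3⟩ := ih
    have hpd : p.natDegree = N := Polynomial.natDegree_eq_of_degree_eq_some hp2
    obtain ⟨R, hR1, hR2, hR3⟩ := aux_R ρ γ p
    rw [hpd] at hR2 hR3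
    have hlc : p.coeff N = ρ ^ (N * (N - 1) / 2) := by
      have := hp3
      rwa [Polynomial.leadingCoeff, hpd] at this
    have hcoef : R.coeff N = ρ ^ N * ρ ^ (N * (N - 1) / 2) := by rw [hR3, hlc]
    have hne : R.coeff N ≠ 0 := by rw [hcoef]; positivity
    have hRdeg : R.degree = (N : ℕ) := Polynomial.degree_eq_of_le_of_coeff_ne_zero hR2 hne
    have hRnat : R.natDegree = N := Polynomial.natDegree_eq_of_degree_eq_some hRdeg
    refine ⟨(Polynomial.X + Polynomial.C μ) * R, ?_, ?_, ?_⟩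
    · intro x
      rw [hQ N x]
      have hint : (∫ y, Q N (ρ * x + γ * y) ∂(gaussianReal 0 1)) = R.eval x := by
        rw [← hR1 x]
        have : (fun y => Q N (ρ * x + γ * y))
            = fun y => Polynomial.eval (ρ * x + γ * y) p := funext fun y => hp1 _
        rw [this]
      rw [hint]
      simp only [Polynomial.eval_mul, Polynomial.eval_add, Polynomial.eval_X, Polynomial.eval_C]
      ring
    · rw [Polynomial.degree_mul, Polynomial.degree_X_add_C, hRdeg]
      norm_cast
      omega
    · rw [Polynomial.leadingCoeff_mul, Polynomial.leadingCoeff_X_add_C, one_mul,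
        Polynomial.leadingCoeff, hRnat, hcoef, ← pow_add, aux_exp]
end
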